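/- For any balanced directed graph G = (V, E) on n vertices and ε ∈ (0, 0.1) such that the arboricity λ(G) of the underlying undirected graph satisfies λ(G) ≥ 16 log n / ε², the maximum out-degree lies in the interval [λ(G)/2, (1 + ε)·λ(G)]. -/

import Mathlib

open Finset
open scoped NNRat

/-- Out-degree of `v` in the directed edge set `E`. -/
def outdeg {V : Type*} [DecidableEq V] (E : Finset (V × V)) (v : V) : ℕ :=
  (E.filter fun e => e.1 = v).card

/-- A directed graph is balanced if `δ⁺(u) ≤ δ⁺(v) + 1` for every edge `u → v`. -/
def IsBalanced {V : Type*} [DecidableEq V] (E : Finset (V × V)) : Prop :=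
  ∀ e ∈ E, outdeg E e.1 ≤ outdeg E e.2 + 1

/-- Arboricity of the underlying undirected graph, via Nash-Williams:
`max` over `S ⊆ V` with `|S| ≥ 2` of `⌈|E[S]| / (|S| − 1)⌉`. -/
def arboricity {V : Type*} [Fintype V] [DecidableEq V] (E : Finset (V × V)) : ℕ :=
  ((univ : Finset V).powerset.filter fun S => 2 ≤ S.card).sup
    fun S => ⌈((E.filter fun e => e.1 ∈ S ∧ e.2 ∈ S).card : ℚ) / ((S.card : ℚ) - 1)⌉₊

section Aux
variable {V : Type*} [DecidableEq V] (E : Finset (V × V))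

def grow (S : Finset V) : Finset V :=
  S ∪ (E.filter fun e => e.1 ∈ S).image Prod.snd

lemma sum_outdeg (S : Finset V) :
    ∑ v ∈ S, outdeg E v = (E.filter fun e => e.1 ∈ S).card := by
  rw [Finset.card_eq_sum_card_fiberwise (f := Prod.fst) (s := E.filter fun e => e.1 ∈ S) (t := S)
    (fun e he => (mem_filter.mp he).2)]
  refine Finset.sum_congr rfl fun v hv => ?_
  unfold outdeg
  congr 1
  rw [Finset.filter_filter]
  ext e
  simp only [mem_filter]
  constructor
  · rintro ⟨h1, h2⟩; exact ⟨h1, h2 ▸ hv, h2⟩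
  · rintro ⟨h1, _, h3⟩; exact ⟨h1, h3⟩

lemma edges_lower (S : Finset V) :
    ∑ v ∈ S, outdeg E v ≤ (E.filter fun e => e.1 ∈ grow E S ∧ e.2 ∈ grow E S).card := by
  rw [sum_outdeg]
  apply card_le_card
  intro e he
  rw [mem_filter] at he ⊢
  exact ⟨he.1, mem_union_left _ he.2,
    mem_union_right _ (mem_image.mpr ⟨e, mem_filter.mpr ⟨he.1, he.2⟩, rfl⟩)⟩

lemma arb_bound [Fintype V] (S : Finset V) (hS : 2 ≤ S.card) :
    ((E.filter fun e => e.1 ∈ S ∧ e.2 ∈ S).card : ℝ) ≤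
      (arboricity E : ℝ) * ((S.card : ℝ) - 1) := by
  have hmem : S ∈ (univ : Finset V).powerset.filter fun S => 2 ≤ S.card := by
    simp [Finset.mem_filter, Finset.mem_powerset, hS]
  have h1 := Finset.le_sup
    (f := fun S => ⌈((E.filter fun e => e.1 ∈ S ∧ e.2 ∈ S).card : ℚ) / ((S.card : ℚ) - 1)⌉₊) hmem
  have h2 : ((E.filter fun e => e.1 ∈ S ∧ e.2 ∈ S).card : ℚ) / ((S.card : ℚ) - 1)
      ≤ (arboricity E : ℚ) :=
    le_trans (Nat.le_ceil _) (by
      have h1' : ⌈((E.filter fun e => e.1 ∈ S ∧ e.2 ∈ S).card : ℚ) / ((S.card : ℚ) - 1)⌉₊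
          ≤ arboricity E := h1
      exact_mod_cast h1')
  have hcq : (2:ℚ) ≤ (S.card : ℚ) := by exact_mod_cast hS
  rw [div_le_iff₀ (by linarith)] at h2
  have h3 : (((E.filter fun e => e.1 ∈ S ∧ e.2 ∈ S).card : ℚ) : ℝ)
      ≤ (((arboricity E : ℚ) * ((S.card : ℚ) - 1) : ℚ) : ℝ) := by exact_mod_cast h2
  push_cast at h3
  linarith

end Aux

set_option maxHeartbeats 1000000 in
/-- For any balanced loopless directed graph on `n` vertices and `ε ∈ (0, 0.1)` such that
the arboricity `λ(G)` satisfies `λ(G) ≥ 16 log n / ε²`, the maximum out-degree lies in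
`[λ(G)/2, (1 + ε)·λ(G)]`. -/
theorem max_outdeg_arboricity {V : Type*} [Fintype V] [DecidableEq V]
    (E : Finset (V × V)) (ε : ℝ)
    (hloopless : ∀ e ∈ E, e.1 ≠ e.2)
    (hbal : IsBalanced E) (hε0 : 0 < ε) (hε1 : ε < 0.1)
    (harb : 16 * Real.log (Fintype.card V) / ε ^ 2 ≤ (arboricity E : ℝ)) :
    (arboricity E : ℝ) / 2 ≤ (((univ : Finset V).sup (outdeg E) : ℕ) : ℝ) ∧
      (((univ : Finset V).sup (outdeg E) : ℕ) : ℝ) ≤ (1 + ε) * (arboricity E : ℝ) := by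
  set A := arboricity E with hA
  set Δ := (univ : Finset V).sup (outdeg E) with hΔdef
  constructor
  · -- lower bound: A ≤ 2 Δ
    have key : A ≤ 2 * Δ := by
      apply Finset.sup_le
      intro S hS
      have hc : 2 ≤ S.card := (mem_filter.mp hS).2
      rw [Nat.ceil_le]
      have he1 : (E.filter fun e => e.1 ∈ S ∧ e.2 ∈ S).card ≤ ∑ v ∈ S, outdeg E v := by
        rw [sum_outdeg]
        apply card_le_card
        intro e he
        rw [mem_filter] at he ⊢
        exact ⟨he.1, he.2.1⟩
      have he2 : ∑ v ∈ S, outdeg E v ≤ S.card * Δ := by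
        calc ∑ v ∈ S, outdeg E v ≤ ∑ _v ∈ S, Δ :=
              Finset.sum_le_sum fun v _ => Finset.le_sup (mem_univ v)
          _ = S.card * Δ := by rw [Finset.sum_const, smul_eq_mul]
      have hcq : (2:ℚ) ≤ (S.card : ℚ) := by exact_mod_cast hc
      rw [div_le_iff₀ (by linarith)]
      have hq : ((E.filter fun e => e.1 ∈ S ∧ e.2 ∈ S).card : ℚ) ≤ (S.card : ℚ) * (Δ : ℚ) := by
        exact_mod_cast le_trans he1 he2
      push_cast
      nlinarith [hq, hcq, Nat.cast_nonneg (α := ℚ) Δ]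
    have : (A : ℝ) ≤ 2 * (Δ : ℝ) := by exact_mod_cast key
    linarith
  · -- upper bound
    by_contra hcon
    push_neg at hcon
    -- hcon : (1 + ε) * A < Δ
    have hApos0 : (0:ℝ) ≤ (A:ℝ) := Nat.cast_nonneg _
    have hΔpos : 0 < Δ := by
      by_contra h
      push_neg at h
      interval_cases Δ
      · simp at hcon; nlinarith
    -- a vertex of max out-degree
    have hVne : (univ : Finset V).Nonempty := by
      rcases isEmpty_or_nonempty V with h | h
      · exfalso; rw [hΔdef, Finset.univ_eq_empty, Finset.sup_empty] at hΔpos; simp at hΔpos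
      · exact univ_nonempty
    obtain ⟨v₀, -, hv₀⟩ := Finset.exists_mem_eq_sup univ hVne (outdeg E)
    -- an out-edge of v₀
    have hv₀' : outdeg E v₀ = Δ := hv₀.symm
    have hodv : 0 < outdeg E v₀ := by rw [hΔdef, hv₀] at hΔpos; exact hΔpos
    obtain ⟨e₀, he₀⟩ := Finset.card_pos.mp hodv
    rw [mem_filter] at he₀
    have hn2 : 2 ≤ Fintype.card V :=
      Fintype.one_lt_card_iff.mpr ⟨e₀.1, e₀.2, hloopless e₀ he₀.1⟩
    set L := Real.log (Fintype.card V) with hLdef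
    have hL2 : (0.69 : ℝ) ≤ L := by
      have h2n : (2:ℝ) ≤ (Fintype.card V : ℝ) := by exact_mod_cast hn2
      have := Real.log_le_log (by norm_num) h2n
      have h69 := Real.log_two_gt_d9
      rw [hLdef]; norm_num at h69 ⊢; linarith
    have hεsq : (0:ℝ) < ε ^ 2 := by positivity
    have hA1 : (1:ℝ) ≤ (A:ℝ) := by
      have : (0:ℝ) < (A:ℝ) := by
        calc (0:ℝ) < 16 * L / ε ^ 2 := by positivity
          _ ≤ (A:ℝ) := harb
      have : 0 < A := by exact_mod_cast this
      exact_mod_cast this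
    have hΔA : (A:ℝ) < (Δ:ℝ) := by nlinarith
    -- the growing sequence of sets
    set Sk : ℕ → Finset V := fun k => (grow E)^[k] {v₀} with hSkdef
    have hSk_succ : ∀ k, Sk (k+1) = grow E (Sk k) := fun k =>
      Function.iterate_succ_apply' _ _ _
    have hmono : ∀ k, Sk k ⊆ Sk (k+1) := by
      intro k; rw [hSk_succ]; exact subset_union_left
    have hmono' : ∀ j k, j ≤ k → Sk j ⊆ Sk k := by
      intro j k hjk
      induction k with
      | zero => rw [Nat.le_zero.mp hjk]
      | succ m ih =>
        rcases Nat.lt_or_ge j (m+1) with h | h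
        · exact (ih (Nat.lt_succ_iff.mp h)).trans (hmono m)
        · rw [le_antisymm hjk h]
    have hdeg : ∀ k, ∀ v ∈ Sk k, Δ ≤ outdeg E v + k := by
      intro k
      induction k with
      | zero =>
        intro v hv
        rw [hSkdef] at hv
        simp only [Function.iterate_zero, id_eq, mem_singleton] at hv
        rw [hv, hv₀']; omega
      | succ m ih =>
        intro v hv
        rw [hSk_succ, grow, mem_union] at hv
        rcases hv with hv | hv
        · have := ih v hv; omega
        · rw [mem_image] at hv
          obtain ⟨e, he, rfl⟩ := hv
          rw [mem_filter] at he
          have h1 := hbal e he.1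
          have h2 := ih e.1 he.2
          omega
    have hcard2 : ∀ k, 2 ≤ (Sk (k+1)).card := by
      intro k
      have h1 : 1 < (Sk 1).card := by
        rw [Finset.one_lt_card]
        refine ⟨v₀, ?_, e₀.2, ?_, ?_⟩
        · have : v₀ ∈ Sk 0 := by
            rw [hSkdef]; simp
          exact hmono 0 this
        · rw [hSk_succ, grow, mem_union]
          right
          rw [mem_image]
          refine ⟨e₀, ?_, rfl⟩
          rw [mem_filter]
          refine ⟨he₀.1, ?_⟩
          rw [hSkdef, he₀.2]; simp
        · rw [← he₀.2]; exact hloopless e₀ he₀.1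
      exact h1.trans_le (Finset.card_le_card (hmono' 1 (k+1) (by omega)))
    have hv0mem : ∀ k, v₀ ∈ Sk k := by
      intro k
      have : v₀ ∈ Sk 0 := by rw [hSkdef]; simp
      exact hmono' 0 k (Nat.zero_le _) this
    -- growth step
    have growth : ∀ k : ℕ, (k:ℝ) < ε * (Δ:ℝ) / 2 →
        (1 + 0.4 * ε) * ((Sk k).card : ℝ) ≤ ((Sk (k+1)).card : ℝ) := by
      intro k hk
      have hkΔ : k ≤ Δ := by
        have : (k:ℝ) < (Δ:ℝ) := by nlinarith [Nat.cast_nonneg (α := ℝ) Δ]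
        exact_mod_cast this.le
      have h1 : (Sk k).card * (Δ - k) ≤
          (E.filter fun e => e.1 ∈ Sk (k+1) ∧ e.2 ∈ Sk (k+1)).card := by
        have hs := Finset.card_nsmul_le_sum (Sk k) (outdeg E) (Δ - k)
          (fun v hv => by have := hdeg k v hv; omega)
        rw [smul_eq_mul] at hs
        calc (Sk k).card * (Δ - k) ≤ ∑ v ∈ Sk k, outdeg E v := hs
          _ ≤ _ := by rw [hSk_succ]; exact edges_lower E (Sk k)
      have h2 : ((E.filter fun e => e.1 ∈ Sk (k+1) ∧ e.2 ∈ Sk (k+1)).card : ℝ) ≤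
          (A:ℝ) * (((Sk (k+1)).card : ℝ) - 1) := arb_bound E _ (hcard2 k)
      have h1r : ((Sk k).card : ℝ) * ((Δ:ℝ) - (k:ℝ)) ≤
          ((E.filter fun e => e.1 ∈ Sk (k+1) ∧ e.2 ∈ Sk (k+1)).card : ℝ) := by
        have := (Nat.cast_le (α := ℝ)).mpr h1
        push_cast [Nat.cast_sub hkΔ] at this
        linarith
      have h3 : (1 + 0.4 * ε) * (A:ℝ) ≤ (Δ:ℝ) - (k:ℝ) := by
        nlinarith [hcon, hk, hA1, hε0, hε1]
      have hck0 : (0:ℝ) ≤ ((Sk k).card : ℝ) := Nat.cast_nonneg _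
      have h4 : (1 + 0.4 * ε) * (A:ℝ) * ((Sk k).card : ℝ) ≤
          (A:ℝ) * (((Sk (k+1)).card : ℝ) - 1) := by
        nlinarith [mul_le_mul_of_nonneg_right h3 hck0]
      nlinarith [h4, hA1, hε0, hck0]
    -- geometric growth up to K = floor (ε Δ / 2)
    set K : ℕ := ⌊ε * (Δ:ℝ) / 2⌋₊ with hKdef
    have hKle : (K:ℝ) ≤ ε * (Δ:ℝ) / 2 := Nat.floor_le (by positivity)
    have hKge : ε * (Δ:ℝ) / 2 < (K:ℝ) + 1 := Nat.lt_floor_add_one _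
    have geom : ∀ k, k ≤ K → (1 + 0.4 * ε) ^ k ≤ ((Sk k).card : ℝ) := by
      intro k
      induction k with
      | zero => intro _; simp [hSkdef]
      | succ m ih =>
        intro hk
        have ihm := ih (by omega)
        have hmlt : (m:ℝ) < ε * (Δ:ℝ) / 2 := by
          have h : (m:ℝ) < (K:ℝ) := by exact_mod_cast (by omega : m < K)
          linarith
        have hg := growth m hmlt
        have hb : (0:ℝ) ≤ 1 + 0.4 * ε := by linarith
        calc (1 + 0.4*ε)^(m+1) = (1 + 0.4*ε) * (1+0.4*ε)^m := by ring
          _ ≤ (1 + 0.4*ε) * ((Sk m).card:ℝ) := mul_le_mul_of_nonneg_left ihm hb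
          _ ≤ _ := hg
    have hcardn : ((Sk K).card : ℝ) ≤ (Fintype.card V : ℝ) := by
      exact_mod_cast (Finset.card_le_univ (Sk K)).trans_eq Finset.card_univ
    have hpow : (1 + 0.4*ε)^K ≤ (Fintype.card V : ℝ) := le_trans (geom K le_rfl) hcardn
    have hKlog : (K:ℝ) * Real.log (1 + 0.4*ε) ≤ L := by
      have h1 : Real.log ((1 + 0.4*ε)^K) ≤ L := Real.log_le_log (by positivity) hpow
      rwa [Real.log_pow] at h1
    have hlog : 0.38 * ε ≤ Real.log (1 + 0.4*ε) := by
      have hx : (0:ℝ) < 1 + 0.4*ε := by linarith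
      have h1 : Real.log (1+0.4*ε)⁻¹ ≤ (1+0.4*ε)⁻¹ - 1 :=
        Real.log_le_sub_one_of_pos (by positivity)
      rw [Real.log_inv] at h1
      have h3 : (1+0.4*ε)⁻¹ ≤ 1 - 0.38*ε := by
        rw [inv_eq_one_div, div_le_iff₀ hx]
        nlinarith
      linarith
    have hεΔ : 16 * L ≤ ε^2 * (Δ:ℝ) := by
      rw [div_le_iff₀ hεsq] at harb
      nlinarith
    have h5 : (K:ℝ) * (0.38*ε) ≤ L :=
      le_trans (mul_le_mul_of_nonneg_left hlog (Nat.cast_nonneg K)) hKlog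
    have h6 : ε * (Δ:ℝ)/2 - 1 ≤ (K:ℝ) := by linarith
    nlinarith [h5, h6, hεΔ, hL2, hε0, hε1,
      mul_le_mul_of_nonneg_right h6 (by linarith : (0:ℝ) ≤ 0.38*ε)]
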